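/- There exists a constant C > 0 such that for all σ > 0 and all real R, z ≥ 2, ∑_{p ≤ z, p prime} min(σ·(log p)/(log R), 1)/p ≤ C · log(1 + σ·(log z)/(log R)). -/

import Mathlib

open Finset

lemma theta_le (n : ℕ) :
    ∑ p ∈ (range (n+1)).filter Nat.Prime, Real.log p ≤ n * Real.log 4 := by
  have h1 : ∑ p ∈ (range (n+1)).filter Nat.Prime, Real.log p
      = Real.log (primorial n) := by
    rw [primorial, Nat.cast_prod, Real.log_prod]
    intro p hp
    exact_mod_cast (Finset.mem_filter.1 hp).2.pos.ne'
  rw [h1]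
  calc Real.log (primorial n) ≤ Real.log ((4:ℕ)^n) := by
        apply Real.log_le_log (by exact_mod_cast primorial_pos n)
        exact_mod_cast primorial_le_4_pow n
    _ = n * Real.log 4 := by
        rw [Real.log_pow]; norm_num

lemma rad_le (m : ℕ) (hm : 0 < m) (s : Finset ℕ) (hs : ∀ p ∈ s, p.Prime ∧ p ∣ m) :
    ∑ p ∈ s, Real.log p ≤ Real.log m := by
  have hsub : s ⊆ m.primeFactors := by
    intro p hp
    exact Nat.mem_primeFactors.2 ⟨(hs p hp).1, (hs p hp).2, hm.ne'⟩
  calc ∑ p ∈ s, Real.log p ≤ ∑ p ∈ m.primeFactors, Real.log p := by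
        apply Finset.sum_le_sum_of_subset_of_nonneg hsub
        intro p hp _
        exact Real.log_natCast_nonneg p
    _ = Real.log (∏ p ∈ m.primeFactors, (p:ℝ)) := by
        rw [Real.log_prod]
        intro p hp
        exact_mod_cast (Nat.prime_of_mem_primeFactors hp).pos.ne'
    _ ≤ Real.log m := by
        apply Real.log_le_log
        · exact Finset.prod_pos fun p hp => by exact_mod_cast (Nat.prime_of_mem_primeFactors hp).pos
        · rw [← Nat.cast_prod]
          exact_mod_cast Nat.le_of_dvd hm (Nat.prod_primeFactors_dvd m)

lemma key_sum_le (n : ℕ) :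
    ∑ p ∈ (range (n+1)).filter Nat.Prime, Real.log p * ((n / p : ℕ) : ℝ)
      ≤ Real.log (Nat.factorial n) := by
  have h1 : ∀ p ∈ (range (n+1)).filter Nat.Prime,
      Real.log p * ((n / p : ℕ) : ℝ) = ∑ e ∈ range n, if p ∣ e + 1 then Real.log p else 0 := by
    intro p hp
    rw [← Finset.sum_filter]
    rw [Finset.sum_const]
    rw [Nat.card_multiples n p]
    rw [nsmul_eq_mul, mul_comm]
  rw [Finset.sum_congr rfl h1, Finset.sum_comm]
  have h2 : Real.log (Nat.factorial n) = ∑ e ∈ range n, Real.log (e+1) := by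
    rw [← prod_range_add_one_eq_factorial, Nat.cast_prod, Real.log_prod]
    · norm_num
    · intro x _; positivity
  rw [h2]
  apply Finset.sum_le_sum
  intro e _
  rw [← Finset.sum_filter]
  have := rad_le (e+1) (Nat.succ_pos e)
    (((range (n+1)).filter Nat.Prime).filter (· ∣ e + 1)) ?_
  · exact_mod_cast this
  · intro p hp
    simp only [Finset.mem_filter] at hp
    exact ⟨hp.1.2, hp.2⟩

lemma mertens1 (n : ℕ) (hn : 1 ≤ n) :
    ∑ p ∈ (range (n+1)).filter Nat.Prime, Real.log p / p
      ≤ Real.log n + Real.log 4 := by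
  have hn0 : (0:ℝ) < n := by exact_mod_cast hn
  have key : ∑ p ∈ (range (n+1)).filter Nat.Prime, Real.log p * ((n:ℝ)/p)
      ≤ n * Real.log n + n * Real.log 4 := by
    have step1 : ∑ p ∈ (range (n+1)).filter Nat.Prime, Real.log p * ((n:ℝ)/p)
        ≤ ∑ p ∈ (range (n+1)).filter Nat.Prime,
            (Real.log p * ((n / p : ℕ) : ℝ) + Real.log p) := by
      apply Finset.sum_le_sum
      intro p hp
      have hp2 := (Finset.mem_filter.1 hp).2
      have hppos : (0:ℝ) < p := by exact_mod_cast hp2.pos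
      have hlog : 0 ≤ Real.log p := Real.log_natCast_nonneg p
      have hdiv : (n:ℝ)/p ≤ ((n / p : ℕ) : ℝ) + 1 := by
        rw [div_le_iff₀ hppos]
        have h := Nat.lt_div_mul_add (a := n) hp2.pos
        have h2 : n < (n / p + 1) * p := by rw [add_mul, one_mul]; omega
        exact_mod_cast h2.le
      calc Real.log p * ((n:ℝ)/p) ≤ Real.log p * (((n / p : ℕ) : ℝ) + 1) := by
            exact mul_le_mul_of_nonneg_left hdiv hlog
        _ = Real.log p * ((n / p : ℕ) : ℝ) + Real.log p := by ring
    rw [Finset.sum_add_distrib] at step1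
    have step2 := key_sum_le n
    have step3 := theta_le n
    have step4 : Real.log (Nat.factorial n) ≤ n * Real.log n := by
      calc Real.log (Nat.factorial n) ≤ Real.log ((n:ℝ)^n) := by
            apply Real.log_le_log (by exact_mod_cast n.factorial_pos)
            exact_mod_cast Nat.factorial_le_pow n
        _ = n * Real.log n := Real.log_pow n n
    linarith
  have expand : ∑ p ∈ (range (n+1)).filter Nat.Prime, Real.log p / p
      = (∑ p ∈ (range (n+1)).filter Nat.Prime, Real.log p * ((n:ℝ)/p)) / n := by
    rw [Finset.sum_div]
    apply Finset.sum_congr rfl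
    intro p hp
    have hppos : (0:ℝ) < p := by exact_mod_cast (Finset.mem_filter.1 hp).2.pos
    field_simp
  rw [expand, div_le_iff₀ hn0]
  linarith [key]

lemma min_le_two_log (x : ℝ) (hx : 0 ≤ x) : min x 1 ≤ 2 * Real.log (1 + x) := by
  have h1 : 1 - (1+x)⁻¹ ≤ Real.log (1+x) :=
    Real.one_sub_inv_le_log_of_pos (by linarith)
  rcases le_total x 1 with h | h
  · have : min x 1 = x := min_eq_left h
    rw [this]
    have h2 : x / (1+x) ≤ Real.log (1+x) := by
      have : 1 - (1+x)⁻¹ = x / (1+x) := by field_simp; ring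
      linarith [this ▸ h1]
    have h3 : x / 2 ≤ x / (1+x) := by
      apply div_le_div_of_nonneg_left hx (by linarith) (by linarith)
    linarith
  · have : min x 1 = 1 := min_eq_right h
    rw [this]
    have h2 : Real.log 2 ≤ Real.log (1+x) :=
      Real.log_le_log (by norm_num) (by linarith)
    have := Real.log_two_gt_d9
    linarith

lemma step_bound (t a b : ℝ) (ht : 0 < t) (ha : 0 < a) (hab : a ≤ b) :
    min t (1/b) * (b - a) ≤ 2 * (Real.log (1 + t*b) - Real.log (1 + t*a)) := by
  have hb : 0 < b := lt_of_lt_of_le ha hab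
  have h1a : (0:ℝ) < 1 + t*a := by positivity
  have h1b : (0:ℝ) < 1 + t*b := by nlinarith
  have hlog : 1 - (1 + t*a)/(1 + t*b) ≤ Real.log (1 + t*b) - Real.log (1 + t*a) := by
    have h := Real.one_sub_inv_le_log_of_pos (x := (1+t*b)/(1+t*a)) (by positivity)
    rw [Real.log_div h1b.ne' h1a.ne'] at h
    have : ((1+t*b)/(1+t*a))⁻¹ = (1+t*a)/(1+t*b) := by
      rw [inv_div]
    linarith [this ▸ h]
  have heq : 1 - (1 + t*a)/(1 + t*b) = t*(b-a)/(1+t*b) := by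
    field_simp
    ring
  have hmin0 : 0 ≤ min t (1/b) := le_min ht.le (by positivity)
  have hkey : min t (1/b) * (1 + t*b) ≤ 2*t := by
    rcases le_total (t*b) 1 with h | h
    · have h2 : min t (1/b) ≤ t := min_le_left _ _
      nlinarith
    · have h2 : min t (1/b) ≤ 1/b := min_le_right _ _
      have h3 : 1/b ≤ t := by
        rw [div_le_iff₀ hb]; linarith
      have : min t (1/b) * (1 + t*b) ≤ (1/b) * (1 + t*b) :=
        mul_le_mul_of_nonneg_right h2 h1b.le
      have h4 : (1/b) * (1 + t*b) = 1/b + t := by field_simp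
      linarith
  have hmain : min t (1/b) * (b - a) ≤ 2 * (t*(b-a)/(1+t*b)) := by
    have hba : (0:ℝ) ≤ b - a := by linarith
    calc min t (1/b) * (b - a) = (min t (1/b) * (1+t*b)) * (b-a) / (1+t*b) := by
          field_simp
      _ ≤ (2*t) * (b-a) / (1+t*b) := by gcongr
      _ = 2 * (t*(b-a)/(1+t*b)) := by ring
  calc min t (1/b) * (b - a) ≤ 2 * (t*(b-a)/(1+t*b)) := hmain
    _ = 2 * (1 - (1 + t*a)/(1 + t*b)) := by rw [← heq]
    _ ≤ 2 * (Real.log (1 + t*b) - Real.log (1 + t*a)) := by linarith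

noncomputable def afun (i : ℕ) : ℝ := if Nat.Prime i then Real.log i / i else 0
noncomputable def Afun (m : ℕ) : ℝ := ∑ j ∈ Finset.range m, afun j
noncomputable def wfun (t : ℝ) (i : ℕ) : ℝ := min t (1 / Real.log i)
noncomputable def Ffun (t : ℝ) (i : ℕ) : ℝ := min (t * Real.log i) 1
noncomputable def Gfun (t : ℝ) (i : ℕ) : ℝ := Real.log (1 + t * Real.log i)

lemma afun_nonneg (i : ℕ) : 0 ≤ afun i := by
  unfold afun
  split
  · exact div_nonneg (Real.log_natCast_nonneg i) (Nat.cast_nonneg i)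
  · exact le_refl 0

lemma Afun_nonneg (m : ℕ) : 0 ≤ Afun m :=
  Finset.sum_nonneg fun i _ => afun_nonneg i

lemma Afun_two : Afun 2 = 0 := by
  unfold Afun
  rw [Finset.sum_range_succ, Finset.sum_range_one]
  norm_num [afun]

lemma Afun_one : Afun 1 = 0 := by
  unfold Afun
  rw [Finset.sum_range_one]
  norm_num [afun]

lemma wfun_nonneg (t : ℝ) (ht : 0 < t) (i : ℕ) : 0 ≤ wfun t i := by
  exact le_min ht.le (div_nonneg zero_le_one (Real.log_natCast_nonneg i))

lemma wfun_anti (t : ℝ) (i : ℕ) (hi : 2 ≤ i) : wfun t (i+1) ≤ wfun t i := by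
  unfold wfun
  apply min_le_min le_rfl
  have h2 : (0:ℝ) < Real.log i := Real.log_pos (by exact_mod_cast hi)
  apply one_div_le_one_div_of_le h2
  have : (i:ℝ) ≤ (i:ℝ) + 1 := by linarith
  exact Real.log_le_log (by positivity) (by push_cast; linarith)

lemma wfun_mul_log (t : ℝ) (i : ℕ) (hi : 2 ≤ i) :
    wfun t i * Real.log i = Ffun t i := by
  unfold wfun Ffun
  have h2 : (0:ℝ) < Real.log i := Real.log_pos (by exact_mod_cast hi)
  rw [min_mul_of_nonneg _ _ h2.le, one_div, inv_mul_cancel₀ h2.ne']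

lemma Ffun_mono (t : ℝ) (ht : 0 ≤ t) (i j : ℕ) (hij : i ≤ j) :
    Ffun t i ≤ Ffun t j := by
  unfold Ffun
  apply min_le_min _ le_rfl
  apply mul_le_mul_of_nonneg_left _ ht
  rcases Nat.eq_zero_or_pos i with h | h
  · subst h; simpa using Real.log_natCast_nonneg j
  · exact Real.log_le_log (by exact_mod_cast h) (by exact_mod_cast hij)

lemma Gfun_nonneg (t : ℝ) (ht : 0 ≤ t) (i : ℕ) : 0 ≤ Gfun t i := by
  unfold Gfun
  apply Real.log_nonneg
  nlinarith [Real.log_natCast_nonneg i]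

lemma tele (f : ℕ → ℝ) (n : ℕ) (hn : 2 ≤ n) :
    ∑ i ∈ Finset.Ico 2 n, (f (i+1) - f i) = f n - f 2 := by
  rw [Finset.sum_Ico_eq_sum_range]
  have h1 : ∀ j ∈ Finset.range (n - 2), f (2 + j + 1) - f (2 + j)
      = (fun k => f (2 + k)) (j+1) - (fun k => f (2+k)) j := by
    intro j _
    rfl
  rw [Finset.sum_congr rfl h1, Finset.sum_range_sub (fun k => f (2+k))]
  have : 2 + (n - 2) = n := by omega
  rw [this]

lemma Afun_le (i : ℕ) (hi : 2 ≤ i) : Afun (i+1) ≤ 3 * Real.log i := by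
  have h1 : Afun (i+1) = ∑ p ∈ (range (i+1)).filter Nat.Prime, Real.log p / p := by
    unfold Afun afun
    rw [Finset.sum_filter]
  rw [h1]
  have h2 := mertens1 i (by omega)
  have h3 : Real.log 4 ≤ 2 * Real.log i := by
    have h5 : Real.log 4 = 2 * Real.log 2 := by
      rw [show (4:ℝ) = 2^2 by norm_num, Real.log_pow]
      norm_num
    have h4 : Real.log 2 ≤ Real.log i := Real.log_le_log (by norm_num) (by exact_mod_cast hi)
    linarith
  linarith

lemma per_term (t : ℝ) (ht : 0 < t) (i : ℕ) (hi : 2 ≤ i) :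
    (wfun t i - wfun t (i+1)) * Afun (i+1)
      ≤ 3 * ((Ffun t i - Ffun t (i+1)) + 2*(Gfun t (i+1) - Gfun t i)) := by
  have hd : 0 ≤ wfun t i - wfun t (i+1) := sub_nonneg.2 (wfun_anti t i hi)
  have hA1 : Afun (i+1) ≤ 3 * Real.log i := Afun_le i hi
  have hlogi : 0 < Real.log (i:ℝ) := Real.log_pos (by exact_mod_cast hi)
  have hlogi1 : Real.log (i:ℝ) ≤ Real.log ((i+1 : ℕ) : ℝ) :=
    Real.log_le_log (by positivity) (by exact_mod_cast Nat.le_succ i)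
  have hsb := step_bound t (Real.log (i:ℝ)) (Real.log ((i+1:ℕ):ℝ)) ht hlogi hlogi1
  have hw1 : wfun t i * Real.log (i:ℝ) = Ffun t i := wfun_mul_log t i hi
  have hw2 : wfun t (i+1) * Real.log ((i+1:ℕ):ℝ) = Ffun t (i+1) := wfun_mul_log t (i+1) (by omega)
  have hwdef : wfun t (i+1) = min t (1 / Real.log ((i+1:ℕ):ℝ)) := rfl
  have hGdiff : Gfun t (i+1) - Gfun t i
      = Real.log (1 + t * Real.log ((i+1:ℕ):ℝ)) - Real.log (1 + t * Real.log (i:ℝ)) := rfl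
  have key : (wfun t i - wfun t (i+1)) * Real.log (i:ℝ)
      ≤ (Ffun t i - Ffun t (i+1)) + 2*(Gfun t (i+1) - Gfun t i) := by
    have e1 : (wfun t i - wfun t (i+1)) * Real.log (i:ℝ)
        = (wfun t i * Real.log (i:ℝ) - wfun t (i+1) * Real.log ((i+1:ℕ):ℝ))
          + wfun t (i+1) * (Real.log ((i+1:ℕ):ℝ) - Real.log (i:ℝ)) := by ring
    rw [e1, hw1, hw2]
    have h6 : wfun t (i+1) * (Real.log ((i+1:ℕ):ℝ) - Real.log (i:ℝ))
        ≤ 2*(Gfun t (i+1) - Gfun t i) := by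
      rw [hwdef, hGdiff]
      exact hsb
    linarith
  calc (wfun t i - wfun t (i+1)) * Afun (i+1)
      ≤ (wfun t i - wfun t (i+1)) * (3 * Real.log (i:ℝ)) :=
        mul_le_mul_of_nonneg_left hA1 hd
    _ = 3 * ((wfun t i - wfun t (i+1)) * Real.log (i:ℝ)) := by ring
    _ ≤ 3 * ((Ffun t i - Ffun t (i+1)) + 2*(Gfun t (i+1) - Gfun t i)) := by linarith

/-- Mertens-type estimate: `∑_{p ≤ z} min(σ log_R p, 1)/p ≪ log(1 + σ log_R z)`
uniformly in `σ > 0` and `R, z ≥ 2`. -/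
theorem stmt7 :
    ∃ C : ℝ, 0 < C ∧ ∀ σ R z : ℝ, 0 < σ → 2 ≤ R → 2 ≤ z →
      ∑ p ∈ (Finset.range (Nat.floor z + 1)).filter Nat.Prime,
          min (σ * Real.log p / Real.log R) 1 / (p : ℝ)
        ≤ C * Real.log (1 + σ * Real.log z / Real.log R) := by
  refine ⟨12, by norm_num, ?_⟩
  intro σ R z hσ hR hz
  have hlogR : 0 < Real.log R := Real.log_pos (by linarith)
  set t := σ / Real.log R with htdef
  have ht : 0 < t := div_pos hσ hlogR
  set n := Nat.floor z with hndef
  have hn2 : 2 ≤ n := Nat.le_floor (by exact_mod_cast hz)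
  have hnz : (n:ℝ) ≤ z := Nat.floor_le (by linarith)
  have hn0 : (0:ℝ) < n := by exact_mod_cast Nat.lt_of_lt_of_le (by norm_num) hn2
  -- Step 1: rewrite the sum
  have hterm : ∀ p ∈ (range (n+1)).filter Nat.Prime,
      min (σ * Real.log p / Real.log R) 1 / (p:ℝ) = wfun t p * afun p := by
    intro p hp
    have hpp := (Finset.mem_filter.1 hp).2
    have hlp : 0 < Real.log (p:ℝ) := Real.log_pos (by exact_mod_cast hpp.two_le)
    have h1 : σ * Real.log p / Real.log R = t * Real.log p := by rw [htdef]; ring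
    rw [h1]
    unfold wfun afun
    rw [if_pos hpp]
    rw [show min t (1/Real.log (p:ℝ)) * (Real.log p / p)
        = (min t (1/Real.log (p:ℝ)) * Real.log p) / p by ring]
    rw [min_mul_of_nonneg _ _ hlp.le, one_div, inv_mul_cancel₀ hlp.ne']
  rw [Finset.sum_congr rfl hterm]
  -- Step 2: extend to full range
  have hext : ∑ p ∈ (range (n+1)).filter Nat.Prime, wfun t p * afun p
      = ∑ i ∈ range (n+1), wfun t i * afun i := by
    apply Finset.sum_filter_of_ne
    intro x _ hx
    by_contra hnp
    apply hx
    unfold afun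
    rw [if_neg hnp, mul_zero]
  rw [hext]
  -- Step 3: Abel summation
  have habel := Finset.sum_range_by_parts (wfun t) afun (n+1)
  simp only [smul_eq_mul, Nat.add_sub_cancel] at habel
  have hA : ∀ m : ℕ, (∑ j ∈ range m, afun j) = Afun m := fun m => rfl
  simp only [hA] at habel
  rw [habel]
  -- flip the sign of the second sum
  have hflip : wfun t n * Afun (n+1)
        - ∑ x ∈ range n, (wfun t (x + 1) - wfun t x) * Afun (x+1)
      = wfun t n * Afun (n+1)
        + ∑ x ∈ range n, (wfun t x - wfun t (x + 1)) * Afun (x+1) := by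
    rw [sub_eq_add_neg, ← Finset.sum_neg_distrib]
    congr 1
    apply Finset.sum_congr rfl
    intro i _
    ring
  rw [hflip]
  -- split the sum at 2
  have hsplit : ∑ x ∈ range n, (wfun t x - wfun t (x + 1)) * Afun (x+1)
      = ((wfun t 0 - wfun t 1) * Afun 1 + (wfun t 1 - wfun t 2) * Afun 2)
        + ∑ x ∈ Finset.Ico 2 n, (wfun t x - wfun t (x + 1)) * Afun (x+1) := by
    rw [Finset.range_eq_Ico, ← Finset.sum_Ico_consecutive _ (by norm_num : 0 ≤ 2) hn2]
    congr 1
    rw [show Finset.Ico 0 2 = Finset.range 2 by rw [Finset.range_eq_Ico]]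
    rw [Finset.sum_range_succ, Finset.sum_range_one]
  rw [hsplit, Afun_one, Afun_two]
  -- bound the middle sum
  have hmid : ∑ x ∈ Finset.Ico 2 n, (wfun t x - wfun t (x + 1)) * Afun (x+1)
      ≤ 3 * (Ffun t 2 - Ffun t n) + 6 * (Gfun t n - Gfun t 2) := by
    calc ∑ x ∈ Finset.Ico 2 n, (wfun t x - wfun t (x + 1)) * Afun (x+1)
        ≤ ∑ x ∈ Finset.Ico 2 n,
            (3 * ((Ffun t x - Ffun t (x+1)) + 2*(Gfun t (x+1) - Gfun t x))) :=
          Finset.sum_le_sum fun i hi => per_term t ht i (Finset.mem_Ico.1 hi).1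
      _ = ∑ x ∈ Finset.Ico 2 n,
            (((fun k => -(3 * Ffun t k)) (x+1) - (fun k => -(3 * Ffun t k)) x)
              + ((fun k => 6 * Gfun t k) (x+1) - (fun k => 6 * Gfun t k) x)) := by
          apply Finset.sum_congr rfl
          intro i _
          simp only []
          ring
      _ = 3 * (Ffun t 2 - Ffun t n) + 6 * (Gfun t n - Gfun t 2) := by
          rw [Finset.sum_add_distrib, tele (fun k => -(3 * Ffun t k)) n hn2,
            tele (fun k => 6 * Gfun t k) n hn2]
          ring
  -- bound the boundary term
  have hlogn : 0 < Real.log (n:ℝ) := Real.log_pos (by exact_mod_cast hn2)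
  have hwA : wfun t n * Afun (n+1) ≤ 6 * Gfun t n := by
    calc wfun t n * Afun (n+1) ≤ wfun t n * (3 * Real.log (n:ℝ)) :=
          mul_le_mul_of_nonneg_left (Afun_le n hn2) (wfun_nonneg t ht n)
      _ = 3 * (wfun t n * Real.log (n:ℝ)) := by ring
      _ = 3 * Ffun t n := by rw [wfun_mul_log t n hn2]
      _ ≤ 3 * (2 * Gfun t n) := by
          have h7 := min_le_two_log (t * Real.log (n:ℝ))
            (mul_nonneg ht.le (Real.log_natCast_nonneg n))
          have h8 : Ffun t n = min (t * Real.log (n:ℝ)) 1 := rfl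
          have h9 : Gfun t n = Real.log (1 + t * Real.log (n:ℝ)) := rfl
          rw [h8, h9]
          linarith
      _ = 6 * Gfun t n := by ring
  have hF2n : Ffun t 2 ≤ Ffun t n := Ffun_mono t ht.le 2 n hn2
  have hG2 : 0 ≤ Gfun t 2 := Gfun_nonneg t ht.le 2
  have hGn : Gfun t n ≤ Real.log (1 + σ * Real.log z / Real.log R) := by
    have h1 : σ * Real.log z / Real.log R = t * Real.log z := by rw [htdef]; ring
    rw [h1]
    have h9 : Gfun t n = Real.log (1 + t * Real.log (n:ℝ)) := rfl
    rw [h9]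
    apply Real.log_le_log (by nlinarith [Real.log_natCast_nonneg n])
    have hlz : Real.log (n:ℝ) ≤ Real.log z := Real.log_le_log hn0 hnz
    nlinarith
  linarith
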